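/- Let l1,l2,l3>0 with l1+l2+l3=1, τ∈[0,2π), and k>0 real with sin(kl2) = 0. Then there exists a nonzero u ∈ W^{2,2}(0,l2) satisfying −(u''+2iτu'−τ²u) = k²u on (0,l2), u(0) = e^{−i(l1+l3)τ}·u(l2), and (u'+iτu)(0) − e^{−i(l1+l3)τ}·(u'+iτu)(l2) = −k²(l1+l3)·u(0), if and only if cos(kl2) = e^{iτ}, i.e. if and only if either τ=0 and cos(kl2)=1, or τ=π and cos(kl2)=−1; in that case u(x) = e^{−iτx}·sin(kx) is such a solution. -/

import Mathlib

noncomputable section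

open Set

/-- Derivative of `t ↦ exp (a t)` as a function `ℝ → ℂ`. -/
lemma hasDerivAt_expc (a : ℂ) (x : ℝ) :
    HasDerivAt (fun t : ℝ => Complex.exp (a * ↑t)) (a * Complex.exp (a * ↑x)) x := by
  have h : HasDerivAt (fun z : ℂ => Complex.exp (a * z)) (a * Complex.exp (a * ↑x)) ↑x := by
    exact ((Complex.hasDerivAt_exp (a * ↑x)).comp (↑x : ℂ)
      ((hasDerivAt_id (↑x : ℂ)).const_mul a)).congr_deriv (by ring)
  exact h.comp_ofReal

/-- Derivative of `t ↦ sin (k t)` as a function `ℝ → ℂ`. -/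
lemma hasDerivAt_sinc (k : ℝ) (x : ℝ) :
    HasDerivAt (fun t : ℝ => Complex.sin (↑k * ↑t)) (↑k * Complex.cos (↑k * ↑x)) x := by
  have h : HasDerivAt (fun z : ℂ => Complex.sin ((k:ℂ) * z)) ((k:ℂ) * Complex.cos ((k:ℂ) * ↑x)) ↑x := by
    refine ((Complex.hasDerivAt_sin ((k:ℂ) * ↑x)).comp (↑x : ℂ)
      ((hasDerivAt_id (↑x : ℂ)).const_mul (k:ℂ))).congr_deriv ?_
    ring
  exact h.comp_ofReal

/-- Derivative of `t ↦ cos (k t)` as a function `ℝ → ℂ`. -/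
lemma hasDerivAt_cosc (k : ℝ) (x : ℝ) :
    HasDerivAt (fun t : ℝ => Complex.cos (↑k * ↑t)) (-(↑k * Complex.sin (↑k * ↑x))) x := by
  have h : HasDerivAt (fun z : ℂ => Complex.cos ((k:ℂ) * z)) (-((k:ℂ) * Complex.sin ((k:ℂ) * ↑x))) ↑x := by
    refine ((Complex.hasDerivAt_cos ((k:ℂ) * ↑x)).comp (↑x : ℂ)
      ((hasDerivAt_id (↑x : ℂ)).const_mul (k:ℂ))).congr_deriv ?_
    ring
  exact h.comp_ofReal

/-- A function with vanishing derivative on the open interval is constant on the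
closed interval. -/
lemma const_of_deriv_zero_Ioo {L : ℝ} (hL : 0 < L) {f f' : ℝ → ℂ}
    (hf : ∀ x ∈ Icc (0:ℝ) L, HasDerivAt f (f' x) x)
    (h0 : ∀ x ∈ Ioo (0:ℝ) L, f' x = 0) : ∀ x ∈ Icc (0:ℝ) L, f x = f (L/2) := by
  have hmem : (L/2) ∈ Ioo (0:ℝ) L := ⟨by linarith, by linarith⟩
  have hcont : ContinuousOn f (Icc 0 L) := fun x hx => (hf x hx).continuousAt.continuousWithinAt
  have key : ∀ a ∈ Ioo (0:ℝ) L, ∀ b ∈ Ioo (0:ℝ) L, a ≤ b → f b = f a := by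
    intro a ha b hb hab
    have hsub : Icc a b ⊆ Ioo (0:ℝ) L := fun t ht => ⟨lt_of_lt_of_le ha.1 ht.1, lt_of_le_of_lt ht.2 hb.2⟩
    have := constant_of_has_deriv_right_zero (f := f) (a := a) (b := b)
      (hcont.mono (hsub.trans Ioo_subset_Icc_self))
      (fun x hx => by
        have hx' : x ∈ Ioo (0:ℝ) L := hsub ⟨hx.1, hx.2.le⟩
        have := (hf x (Ioo_subset_Icc_self hx')).hasDerivWithinAt (s := Ici x)
        rwa [h0 x hx'] at this)
    exact this b (right_mem_Icc.2 hab)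
  have hIoo : ∀ x ∈ Ioo (0:ℝ) L, f x = f (L/2) := by
    intro x hx
    rcases le_total x (L/2) with h | h
    · exact (key x hx (L/2) hmem h).symm
    · exact key (L/2) hmem x hx h
  intro c hc
  rcases eq_or_lt_of_le hc.1 with h0c | h0c
  · subst h0c
    have hne : (nhdsWithin (0:ℝ) (Ioo (0:ℝ) L)).NeBot := by
      rw [← mem_closure_iff_nhdsWithin_neBot, closure_Ioo hL.ne]
      exact ⟨le_rfl, hL.le⟩
    have h1 : Filter.Tendsto f (nhdsWithin (0:ℝ) (Ioo (0:ℝ) L)) (nhds (f 0)) :=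
      ((hf 0 (left_mem_Icc.2 hL.le)).continuousAt.continuousWithinAt)
    have h2 : Filter.Tendsto f (nhdsWithin (0:ℝ) (Ioo (0:ℝ) L)) (nhds (f (L/2))) := by
      apply Filter.Tendsto.congr' _ tendsto_const_nhds
      filter_upwards [self_mem_nhdsWithin] with t ht
      exact (hIoo t ht).symm
    exact tendsto_nhds_unique h1 h2
  rcases eq_or_lt_of_le hc.2 with hcL | hcL
  · rw [hcL]
    have hne : (nhdsWithin L (Ioo (0:ℝ) L)).NeBot := by
      rw [← mem_closure_iff_nhdsWithin_neBot, closure_Ioo hL.ne]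
      exact ⟨hL.le, le_rfl⟩
    have h1 : Filter.Tendsto f (nhdsWithin L (Ioo (0:ℝ) L)) (nhds (f L)) :=
      ((hf L (right_mem_Icc.2 hL.le)).continuousAt.continuousWithinAt)
    have h2 : Filter.Tendsto f (nhdsWithin L (Ioo (0:ℝ) L)) (nhds (f (L/2))) := by
      apply Filter.Tendsto.congr' _ tendsto_const_nhds
      filter_upwards [self_mem_nhdsWithin] with t ht
      exact (hIoo t ht).symm
    exact tendsto_nhds_unique h1 h2
  · exact hIoo c ⟨h0c, hcL⟩

/-- `u` (with derivative data `u'`, `u''`) is an `W^{2,2}`(0,l2) solution of the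
eigenvalue problem `((1/i)d/dx + τ)² u = k² u` with the boundary conditions of the
homogenised operator `A_hom^{(τ)}` at energy `z = k²`. -/
def IsNonBlochEigenfunction (l1 l2 l3 τ k : ℝ) (u u' u'' : ℝ → ℂ) : Prop :=
  (∀ x ∈ Set.Icc (0 : ℝ) l2, HasDerivAt u (u' x) x ∧ HasDerivAt u' (u'' x) x) ∧
  (∀ x ∈ Set.Ioo (0 : ℝ) l2,
    -(u'' x + 2 * Complex.I * (τ : ℂ) * u' x - (τ : ℂ) ^ 2 * u x) = ((k : ℂ)) ^ 2 * u x) ∧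
  u 0 = Complex.exp (-(Complex.I * (((l1 + l3) * τ : ℝ) : ℂ))) * u l2 ∧
  (u' 0 + Complex.I * (τ : ℂ) * u 0) -
      Complex.exp (-(Complex.I * (((l1 + l3) * τ : ℝ) : ℂ))) *
        (u' l2 + Complex.I * (τ : ℂ) * u l2)
    = -(((k : ℂ)) ^ 2 * ((l1 + l3 : ℝ) : ℂ) * u 0)

/-- Section 6.3 of the paper: the non-Bloch spectrum of the homogenised operator
`A_hom^{(τ)}`.  At energies `z = k²` with `sin(k l2) = 0` a nontrivial eigenfunction
exists iff `cos(k l2) = e^{iτ}`, i.e. iff `τ = 0` and `cos(k l2) = 1` or `τ = π` and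
`cos(k l2) = −1`; in that case `u(x) = e^{−iτx} sin(kx)` is such an eigenfunction. -/
theorem non_bloch_spectrum (l1 l2 l3 : ℝ) (hl1 : 0 < l1) (hl2 : 0 < l2) (hl3 : 0 < l3)
    (hsum : l1 + l2 + l3 = 1) (τ : ℝ) (hτ0 : 0 ≤ τ) (hτ : τ < 2 * Real.pi)
    (k : ℝ) (hk : 0 < k) (hs : Real.sin (k * l2) = 0) :
    ((∃ u u' u'' : ℝ → ℂ, IsNonBlochEigenfunction l1 l2 l3 τ k u u' u'' ∧
        ∃ x ∈ Set.Icc (0 : ℝ) l2, u x ≠ 0) ↔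
      Complex.cos ((k : ℂ) * (l2 : ℂ)) = Complex.exp (Complex.I * (τ : ℂ))) ∧
    (Complex.cos ((k : ℂ) * (l2 : ℂ)) = Complex.exp (Complex.I * (τ : ℂ)) ↔
      ((τ = 0 ∧ Real.cos (k * l2) = 1) ∨ (τ = Real.pi ∧ Real.cos (k * l2) = -1))) ∧
    (Complex.cos ((k : ℂ) * (l2 : ℂ)) = Complex.exp (Complex.I * (τ : ℂ)) →
      ∃ u' u'' : ℝ → ℂ,
        IsNonBlochEigenfunction l1 l2 l3 τ k
          (fun x : ℝ => Complex.exp (-(Complex.I * (τ : ℂ) * (x : ℂ))) *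
            Complex.sin ((k : ℂ) * (x : ℂ))) u' u'' ∧
        ∃ x ∈ Set.Icc (0 : ℝ) l2,
          Complex.exp (-(Complex.I * (τ : ℂ) * (x : ℂ))) *
            Complex.sin ((k : ℂ) * (x : ℂ)) ≠ 0) := by
  have hkne : (k:ℂ) ≠ 0 := by exact_mod_cast hk.ne'
  have hS : Complex.sin ((k:ℂ) * (l2:ℂ)) = 0 := by
    rw [← Complex.ofReal_mul, ← Complex.ofReal_sin, hs, Complex.ofReal_zero]
  have hC2 : Complex.cos ((k:ℂ) * (l2:ℂ)) ^ 2 = 1 := by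
    have := Complex.sin_sq_add_cos_sq ((k:ℂ) * (l2:ℂ))
    rw [hS] at this; simpa using this
  have hkl2 : Real.pi ≤ k * l2 := by
    obtain ⟨n, hn⟩ := Real.sin_eq_zero_iff.1 hs
    have hpos : (0:ℝ) < k * l2 := mul_pos hk hl2
    have hpi := Real.pi_pos
    have hn1 : 1 ≤ n := by
      by_contra h
      push_neg at h
      have hn0 : n ≤ 0 := by omega
      have : (n:ℝ) ≤ 0 := by exact_mod_cast hn0
      nlinarith
    have : (1:ℝ) ≤ (n:ℝ) := by exact_mod_cast hn1
    nlinarith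
  have hEfull : Complex.exp (-(Complex.I * (((l1 + l3) * τ : ℝ) : ℂ))) *
      Complex.exp (-(Complex.I * (τ:ℂ) * (l2:ℂ))) = Complex.exp (-(Complex.I * (τ:ℂ))) := by
    rw [← Complex.exp_add]
    congr 1
    have hcast : ((l1:ℂ) + l2 + l3) = 1 := by exact_mod_cast congrArg (Complex.ofReal) hsum
    push_cast
    linear_combination (-(Complex.I) * (τ:ℂ)) * hcast
  -- Part 3: the explicit eigenfunction.
  have part3 : Complex.cos ((k : ℂ) * (l2 : ℂ)) = Complex.exp (Complex.I * (τ : ℂ)) →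
      ∃ u' u'' : ℝ → ℂ,
        IsNonBlochEigenfunction l1 l2 l3 τ k
          (fun x : ℝ => Complex.exp (-(Complex.I * (τ : ℂ) * (x : ℂ))) *
            Complex.sin ((k : ℂ) * (x : ℂ))) u' u'' ∧
        ∃ x ∈ Set.Icc (0 : ℝ) l2,
          Complex.exp (-(Complex.I * (τ : ℂ) * (x : ℂ))) *
            Complex.sin ((k : ℂ) * (x : ℂ)) ≠ 0 := by
    intro hC
    refine ⟨fun x : ℝ => Complex.exp (-(Complex.I * (τ:ℂ) * (x:ℂ))) *
        ((k:ℂ) * Complex.cos ((k:ℂ)*(x:ℂ)) - Complex.I*(τ:ℂ)*Complex.sin ((k:ℂ)*(x:ℂ))),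
      fun x : ℝ => Complex.exp (-(Complex.I * (τ:ℂ) * (x:ℂ))) *
        (-((k:ℂ)^2) * Complex.sin ((k:ℂ)*(x:ℂ)) - 2*Complex.I*(τ:ℂ)*(k:ℂ)*Complex.cos ((k:ℂ)*(x:ℂ))
          - (τ:ℂ)^2 * Complex.sin ((k:ℂ)*(x:ℂ))), ⟨?_, ?_, ?_, ?_⟩, ?_⟩
    · intro x _hx
      have hfun : (fun t : ℝ => Complex.exp (-(Complex.I * (τ:ℂ)) * ↑t))
          = fun t : ℝ => Complex.exp (-(Complex.I * (τ:ℂ) * (t:ℂ))) := by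
        funext t; rw [neg_mul, mul_assoc]
      have hed : ∀ y : ℝ, HasDerivAt (fun t : ℝ => Complex.exp (-(Complex.I * (τ:ℂ) * (t:ℂ))))
          (-(Complex.I * (τ:ℂ)) * Complex.exp (-(Complex.I * (τ:ℂ) * (y:ℂ)))) y := by
        intro y
        have := hasDerivAt_expc (-(Complex.I * (τ:ℂ))) y
        rw [hfun] at this
        simpa [neg_mul, mul_assoc] using this
      constructor
      · have h := (hed x).mul (hasDerivAt_sinc k x)
        refine h.congr_deriv ?_
        ring
      · have h := (hed x).mul (((hasDerivAt_cosc k x).const_mul ((k:ℂ))).sub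
          ((hasDerivAt_sinc k x).const_mul (Complex.I*(τ:ℂ))))
        refine h.congr_deriv ?_
        simp only [Pi.sub_apply]
        ring_nf
        simp only [Complex.I_sq]
        ring
    · intro x _hx
      ring_nf
      simp only [Complex.I_sq]
      ring
    · simp [hS]
    · have hE1 : Complex.exp (-(Complex.I * (τ:ℂ) * (l2:ℂ))) * Complex.exp (Complex.I * (τ:ℂ)) *
          Complex.exp (-(Complex.I * (((l1 + l3) * τ : ℝ) : ℂ))) = 1 := by
        rw [← Complex.exp_add, ← Complex.exp_add, ← Complex.exp_zero]
        congr 1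
        have hcast : ((l1:ℂ) + l2 + l3) = 1 := by exact_mod_cast congrArg (Complex.ofReal) hsum
        push_cast
        linear_combination (-(Complex.I) * (τ:ℂ)) * hcast
      simp only [Complex.ofReal_zero, mul_zero, Complex.exp_zero, Complex.cos_zero,
        Complex.sin_zero, hS, one_mul, mul_one, sub_zero, add_zero, neg_zero, zero_mul, zero_add]
      rw [hC]
      linear_combination (-(k:ℂ)) * hE1
    · refine ⟨Real.pi / (2*k), ⟨by positivity, ?_⟩, ?_⟩
      · rw [div_le_iff₀ (by positivity)]
        nlinarith [Real.pi_pos]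
      · have harg : (k:ℂ) * ((Real.pi / (2*k) : ℝ) : ℂ) = ((Real.pi/2 : ℝ) : ℂ) := by
          push_cast
          field_simp
        rw [harg, ← Complex.ofReal_sin, Real.sin_pi_div_two]
        simp [Complex.exp_ne_zero]
  -- Part 2
  have part2 : Complex.cos ((k : ℂ) * (l2 : ℂ)) = Complex.exp (Complex.I * (τ : ℂ)) ↔
      ((τ = 0 ∧ Real.cos (k * l2) = 1) ∨ (τ = Real.pi ∧ Real.cos (k * l2) = -1)) := by
    constructor
    · intro hC
      have hcosr : Complex.cos ((k:ℂ) * (l2:ℂ)) = ((Real.cos (k*l2) : ℝ) : ℂ) := by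
        rw [← Complex.ofReal_mul, Complex.ofReal_cos]
      have hexp : Complex.exp (Complex.I * (τ:ℂ)) =
          ((Real.cos τ : ℝ):ℂ) + ((Real.sin τ : ℝ):ℂ) * Complex.I := by
        rw [mul_comm, Complex.exp_mul_I, ← Complex.ofReal_cos, ← Complex.ofReal_sin]
      rw [hcosr, hexp, Complex.ext_iff] at hC
      simp only [Complex.add_re, Complex.add_im, Complex.ofReal_re, Complex.ofReal_im,
        Complex.mul_re, Complex.mul_im, Complex.I_re, Complex.I_im] at hC
      obtain ⟨hre', him'⟩ := hC
      have him : Real.sin τ = 0 := by linarith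
      have hre : Real.cos (k*l2) = Real.cos τ := by linarith
      obtain ⟨n, hn⟩ := Real.sin_eq_zero_iff.1 him
      have hpi := Real.pi_pos
      have hn0 : (0:ℤ) ≤ n := by
        by_contra h
        push_neg at h
        have h1 : n ≤ -1 := by omega
        have : (n:ℝ) ≤ -1 := by exact_mod_cast h1
        nlinarith
      have hn2 : n < 2 := by
        by_contra h
        push_neg at h
        have : (2:ℝ) ≤ (n:ℝ) := by exact_mod_cast h
        nlinarith
      interval_cases n
      · left
        have hτ0' : τ = 0 := by rw [← hn]; norm_num
        exact ⟨hτ0', by rw [hre, hτ0', Real.cos_zero]⟩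
      · right
        have hτpi : τ = Real.pi := by rw [← hn]; norm_num
        exact ⟨hτpi, by rw [hre, hτpi, Real.cos_pi]⟩
    · rintro (⟨h1, h2⟩ | ⟨h1, h2⟩)
      · rw [h1, ← Complex.ofReal_mul, ← Complex.ofReal_cos, h2]
        simp
      · rw [h1, ← Complex.ofReal_mul, ← Complex.ofReal_cos, h2, mul_comm, Complex.exp_pi_mul_I]
        norm_num
  -- Part 1, forward direction
  have forward : (∃ u u' u'' : ℝ → ℂ, IsNonBlochEigenfunction l1 l2 l3 τ k u u' u'' ∧
        ∃ x ∈ Set.Icc (0 : ℝ) l2, u x ≠ 0) →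
      Complex.cos ((k : ℂ) * (l2 : ℂ)) = Complex.exp (Complex.I * (τ : ℂ)) := by
    rintro ⟨u, u', u'', ⟨hderiv, hode, hbc1, hbc2⟩, x0, hx0, hx0ne⟩
    by_contra hne
    set v : ℝ → ℂ := fun t => Complex.exp (Complex.I * (τ:ℂ) * (t:ℂ)) * u t with hv
    set v' : ℝ → ℂ := fun t => Complex.exp (Complex.I * (τ:ℂ) * (t:ℂ)) *
      (u' t + Complex.I * (τ:ℂ) * u t) with hv'
    set v'' : ℝ → ℂ := fun t => Complex.exp (Complex.I * (τ:ℂ) * (t:ℂ)) *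
      (u'' t + 2 * Complex.I * (τ:ℂ) * u' t - (τ:ℂ)^2 * u t) with hv''
    have hfun : (fun t : ℝ => Complex.exp ((Complex.I * (τ:ℂ)) * ↑t))
        = fun t : ℝ => Complex.exp (Complex.I * (τ:ℂ) * (t:ℂ)) := by
      funext t; rw [mul_assoc]
    have hed : ∀ y : ℝ, HasDerivAt (fun t : ℝ => Complex.exp (Complex.I * (τ:ℂ) * (t:ℂ)))
        ((Complex.I * (τ:ℂ)) * Complex.exp (Complex.I * (τ:ℂ) * (y:ℂ))) y := by
      intro y
      have := hasDerivAt_expc (Complex.I * (τ:ℂ)) y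
      rw [hfun] at this
      simpa [mul_assoc] using this
    have hvd : ∀ t ∈ Icc (0:ℝ) l2, HasDerivAt v (v' t) t := by
      intro t ht
      have h := (hed t).mul (hderiv t ht).1
      refine h.congr_deriv ?_
      simp only [hv, hv']
      ring
    have hvd' : ∀ t ∈ Icc (0:ℝ) l2, HasDerivAt v' (v'' t) t := by
      intro t ht
      have h := (hed t).mul (((hderiv t ht).2).add (((hderiv t ht).1).const_mul (Complex.I * (τ:ℂ))))
      refine h.congr_deriv ?_
      simp only [hv', hv'', Pi.add_apply]
      ring_nf
      simp only [Complex.I_sq]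
      ring
    have hvode : ∀ t ∈ Ioo (0:ℝ) l2, v'' t + (k:ℂ)^2 * v t = 0 := by
      intro t ht
      have h := hode t ht
      simp only [hv, hv'']
      linear_combination (-(Complex.exp (Complex.I * (τ:ℂ) * (t:ℂ)))) * h
    set f : ℝ → ℂ := fun t => (k:ℂ) * v t * Complex.cos ((k:ℂ)*(t:ℂ)) -
      v' t * Complex.sin ((k:ℂ)*(t:ℂ)) with hfdef
    set g : ℝ → ℂ := fun t => v' t * Complex.cos ((k:ℂ)*(t:ℂ)) +
      (k:ℂ) * v t * Complex.sin ((k:ℂ)*(t:ℂ)) with hgdef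
    have hfd : ∀ t ∈ Icc (0:ℝ) l2, HasDerivAt f
        (-Complex.sin ((k:ℂ)*(t:ℂ)) * (v'' t + (k:ℂ)^2 * v t)) t := by
      intro t ht
      have h := (((hvd t ht).const_mul ((k:ℂ))).mul (hasDerivAt_cosc k t)).sub
        ((hvd' t ht).mul (hasDerivAt_sinc k t))
      refine h.congr_deriv ?_
      ring
    have hgd : ∀ t ∈ Icc (0:ℝ) l2, HasDerivAt g
        (Complex.cos ((k:ℂ)*(t:ℂ)) * (v'' t + (k:ℂ)^2 * v t)) t := by
      intro t ht
      have h := ((hvd' t ht).mul (hasDerivAt_cosc k t)).add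
        (((hvd t ht).const_mul ((k:ℂ))).mul (hasDerivAt_sinc k t))
      refine h.congr_deriv ?_
      ring
    have hfconst := const_of_deriv_zero_Ioo hl2 hfd
      (fun t ht => by rw [hvode t ht]; ring)
    have hgconst := const_of_deriv_zero_Ioo hl2 hgd
      (fun t ht => by rw [hvode t ht]; ring)
    have h0mem : (0:ℝ) ∈ Icc (0:ℝ) l2 := left_mem_Icc.2 hl2.le
    have hl2mem : l2 ∈ Icc (0:ℝ) l2 := right_mem_Icc.2 hl2.le
    have hf0 : f 0 = (k:ℂ) * v 0 := by simp [hfdef]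
    have hg0 : g 0 = v' 0 := by simp [hgdef]
    have hfl2 : f l2 = (k:ℂ) * v l2 * Complex.cos ((k:ℂ)*(l2:ℂ)) := by
      simp only [hfdef, hS, mul_zero, sub_zero]
    have hgl2 : g l2 = v' l2 * Complex.cos ((k:ℂ)*(l2:ℂ)) := by
      simp only [hgdef, hS, mul_zero, add_zero]
    have hfeq : f l2 = f 0 := by rw [hfconst l2 hl2mem, hfconst 0 h0mem]
    have hgeq : g l2 = g 0 := by rw [hgconst l2 hl2mem, hgconst 0 h0mem]
    have hvl2 : v l2 = Complex.cos ((k:ℂ)*(l2:ℂ)) * v 0 := by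
      have h : (k:ℂ) * v l2 * Complex.cos ((k:ℂ)*(l2:ℂ)) = (k:ℂ) * v 0 := by
        rw [← hfl2, ← hf0, hfeq]
      have h3 : (k:ℂ) * v l2 = (k:ℂ) * (Complex.cos ((k:ℂ)*(l2:ℂ)) * v 0) := by
        calc (k:ℂ) * v l2 = (k:ℂ) * v l2 * Complex.cos ((k:ℂ)*(l2:ℂ))^2 := by rw [hC2]; ring
          _ = (k:ℂ) * (Complex.cos ((k:ℂ)*(l2:ℂ)) * v 0) := by
              linear_combination Complex.cos ((k:ℂ)*(l2:ℂ)) * h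
      exact mul_left_cancel₀ hkne h3
    have hv'l2 : v' l2 = Complex.cos ((k:ℂ)*(l2:ℂ)) * v' 0 := by
      have h : v' l2 * Complex.cos ((k:ℂ)*(l2:ℂ)) = v' 0 := by rw [← hgl2, ← hg0, hgeq]
      calc v' l2 = v' l2 * Complex.cos ((k:ℂ)*(l2:ℂ))^2 := by rw [hC2]; ring
        _ = Complex.cos ((k:ℂ)*(l2:ℂ)) * v' 0 := by linear_combination Complex.cos ((k:ℂ)*(l2:ℂ)) * h
    have hv0u : v 0 = u 0 := by simp [hv]
    have hv'0u : v' 0 = u' 0 + Complex.I * (τ:ℂ) * u 0 := by simp [hv']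
    have hul2 : u l2 = Complex.exp (-(Complex.I * (τ:ℂ) * (l2:ℂ))) * v l2 := by
      simp only [hv]
      rw [← mul_assoc, ← Complex.exp_add]
      norm_num
    have hu'l2 : u' l2 + Complex.I * (τ:ℂ) * u l2 =
        Complex.exp (-(Complex.I * (τ:ℂ) * (l2:ℂ))) * v' l2 := by
      simp only [hv']
      rw [← mul_assoc, ← Complex.exp_add]
      norm_num
    set d : ℂ := 1 - Complex.exp (-(Complex.I * (τ:ℂ))) * Complex.cos ((k:ℂ)*(l2:ℂ)) with hddef
    have hdne : d ≠ 0 := by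
      intro h
      apply hne
      have h1 : Complex.exp (-(Complex.I * (τ:ℂ))) * Complex.cos ((k:ℂ)*(l2:ℂ)) = 1 := by
        rw [hddef, sub_eq_zero] at h
        exact h.symm
      calc Complex.cos ((k:ℂ)*(l2:ℂ))
          = (Complex.exp (Complex.I * (τ:ℂ)) * Complex.exp (-(Complex.I * (τ:ℂ)))) *
              Complex.cos ((k:ℂ)*(l2:ℂ)) := by
            rw [← Complex.exp_add]; norm_num
        _ = Complex.exp (Complex.I * (τ:ℂ)) *
              (Complex.exp (-(Complex.I * (τ:ℂ))) * Complex.cos ((k:ℂ)*(l2:ℂ))) := by ring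
        _ = Complex.exp (Complex.I * (τ:ℂ)) := by rw [h1, mul_one]
    have hveq : u 0 = Complex.exp (-(Complex.I * (τ:ℂ))) *
        (Complex.cos ((k:ℂ)*(l2:ℂ)) * u 0) := by
      calc u 0 = Complex.exp (-(Complex.I * (((l1 + l3) * τ : ℝ) : ℂ))) * u l2 := hbc1
        _ = (Complex.exp (-(Complex.I * (((l1 + l3) * τ : ℝ) : ℂ))) *
              Complex.exp (-(Complex.I * (τ:ℂ) * (l2:ℂ)))) *
              (Complex.cos ((k:ℂ)*(l2:ℂ)) * v 0) := by rw [hul2, hvl2]; ring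
        _ = Complex.exp (-(Complex.I * (τ:ℂ))) * (Complex.cos ((k:ℂ)*(l2:ℂ)) * u 0) := by
            rw [hEfull, hv0u]
    have hu0 : u 0 = 0 := by
      have hd : d * u 0 = 0 := by rw [hddef]; linear_combination hveq
      exact (mul_eq_zero.mp hd).resolve_left hdne
    have hv0 : v 0 = 0 := by rw [hv0u]; exact hu0
    rw [← hv'0u, hu'l2, hv'l2, hu0] at hbc2
    have hv'0 : v' 0 = 0 := by
      have hd : d * v' 0 = 0 := by
        rw [hddef]
        linear_combination hbc2 + (Complex.cos ((k:ℂ)*(l2:ℂ)) * v' 0) * hEfull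
      exact (mul_eq_zero.mp hd).resolve_left hdne
    have hfx0 : f x0 = 0 := by
      rw [hfconst x0 hx0, ← hfconst 0 h0mem, hf0, hv0, mul_zero]
    have hgx0 : g x0 = 0 := by
      rw [hgconst x0 hx0, ← hgconst 0 h0mem, hg0, hv'0]
    have hvx0 : (k:ℂ) * v x0 = 0 := by
      have hpyth := Complex.sin_sq_add_cos_sq ((k:ℂ)*(x0:ℂ))
      have hext : (k:ℂ) * v x0 = f x0 * Complex.cos ((k:ℂ)*(x0:ℂ)) +
          g x0 * Complex.sin ((k:ℂ)*(x0:ℂ)) := by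
        simp only [hfdef, hgdef]
        linear_combination (-((k:ℂ) * v x0)) * hpyth
      rw [hext, hfx0, hgx0]
      ring
    have hvx0' : v x0 = 0 := (mul_eq_zero.mp hvx0).resolve_left hkne
    apply hx0ne
    have hprod : Complex.exp (Complex.I * (τ:ℂ) * (x0:ℂ)) * u x0 = 0 := hvx0'
    rcases mul_eq_zero.mp hprod with h | h
    · exact absurd h (Complex.exp_ne_zero _)
    · exact h
  exact ⟨⟨forward, fun h => by
      obtain ⟨u', u'', h1, h2⟩ := part3 h
      exact ⟨_, u', u'', h1, h2⟩⟩, part2, part3⟩
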